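/- Let I ⊆ K[[x_1,…,x_n]] be an ideal and T̄ a total normalized monomial order. If f_1,…,f_k ∈ I are elements whose initial exponents exp_{T̄}(f_i) = α_i are precisely the vertices of the diagram of initial exponents Δ(I) = {exp_{T̄}(f) : f ∈ I}, then f_1,…,f_k generate I. -/

import Mathlib

/-- The value `T̄(a) ∈ ℝ^r` of the tuple of linear forms with coefficient
matrix `c` at `a ∈ ℕ^n`. -/
def tvec {n r : ℕ} (c : Fin r → Fin n → ℝ) (a : Fin n →₀ ℕ) : Fin r → ℝ :=
  fun i => ∑ j, c i j * (a j : ℝ)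

/-- `a` is the initial exponent `exp_{T̄}(f)`: it lies in `supp(f)` and is the
unique `T̄`-minimal element of `supp(f)`. -/
def IsExpOf {K : Type*} [Field K] {n r : ℕ} (c : Fin r → Fin n → ℝ)
    (f : MvPowerSeries (Fin n) K) (a : Fin n →₀ ℕ) : Prop :=
  MvPowerSeries.coeff a f ≠ 0 ∧
    ∀ b : Fin n →₀ ℕ, MvPowerSeries.coeff b f ≠ 0 → b ≠ a →
      toLex (tvec c a) < toLex (tvec c b)

/-- The diagram of initial exponents `Δ(I) = {exp_{T̄}(f) : f ∈ I}`. -/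
def diagOfIdeal {K : Type*} [Field K] {n r : ℕ} (c : Fin r → Fin n → ℝ)
    (I : Ideal (MvPowerSeries (Fin n) K)) : Set (Fin n →₀ ℕ) :=
  {a | ∃ f ∈ I, IsExpOf c f a}

/-- `v` is a vertex of the diagram `Δ`: a minimal element of `Δ` with respect
to the componentwise order (equivalently, `v ∉ Δ \ (v + ℕ^n)`). -/
def IsVertex {n : ℕ} (Δ : Set (Fin n →₀ ℕ)) (v : Fin n →₀ ℕ) : Prop :=
  v ∈ Δ ∧ ∀ w ∈ Δ, (∀ t, w t ≤ v t) → w = v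



variable {n k r : ℕ}

def deg {n : ℕ} (a : Fin n →₀ ℕ) : ℕ := ∑ j, a j

def trel {n r : ℕ} (c : Fin r → Fin n → ℝ) (a b : Fin n →₀ ℕ) : Prop :=
  toLex (tvec c a) < toLex (tvec c b)

theorem trel_def {c : Fin r → Fin n → ℝ} {a b : Fin n →₀ ℕ} :
    trel c a b ↔ ∃ i, (∀ j, j < i → tvec c a j = tvec c b j) ∧ tvec c a i < tvec c b i :=
  Iff.rfl

theorem tvec_add (c : Fin r → Fin n → ℝ) (a b : Fin n →₀ ℕ) (i : Fin r) :
    tvec c (a + b) i = tvec c a i + tvec c b i := by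
  simp only [tvec, Finsupp.coe_add, Pi.add_apply, Nat.cast_add, mul_add,
    Finset.sum_add_distrib]

theorem trel_add_left (c : Fin r → Fin n → ℝ) {a b : Fin n →₀ ℕ} (x : Fin n →₀ ℕ)
    (h : trel c a b) : trel c (x + a) (x + b) := by
  rw [trel_def] at h ⊢
  obtain ⟨i, h1, h2⟩ := h
  exact ⟨i, fun j hj => by rw [tvec_add, tvec_add, h1 j hj],
    by rw [tvec_add, tvec_add]; exact add_lt_add_right h2 _⟩

theorem trel_trans {c : Fin r → Fin n → ℝ} {a b d : Fin n →₀ ℕ}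
    (h1 : trel c a b) (h2 : trel c b d) : trel c a d := by
  have h3 : toLex (tvec c a) < toLex (tvec c d) := lt_trans h1 h2
  exact h3

theorem trel_irrefl {c : Fin r → Fin n → ℝ} {a : Fin n →₀ ℕ} : ¬ trel c a a := by
  intro h
  exact lt_irrefl (toLex (tvec c a)) h

theorem trel_trichotomy {c : Fin r → Fin n → ℝ}
    (htotal : Function.Injective fun a : Fin n →₀ ℕ => tvec c a)
    {a b : Fin n →₀ ℕ} (hab : a ≠ b) : trel c a b ∨ trel c b a := by
  have htri := (Pi.isTrichotomous_lex ((· < ·) : Fin r → Fin r → Prop)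
    (fun {_} => ((· < ·) : ℝ → ℝ → Prop))
    (IsWellFounded.wf : WellFounded ((· < ·) : Fin r → Fin r → Prop))).trichotomous
  by_contra hne
  exact hab (htotal (htri (tvec c a) (tvec c b) (not_or.mp hne).1 (not_or.mp hne).2))

theorem tvec_zero_eq_deg {c : Fin (r + 1) → Fin n → ℝ} (hnorm : ∀ j, c 0 j = 1)
    (a : Fin n →₀ ℕ) : tvec c a 0 = (deg a : ℝ) := by
  simp [tvec, deg, hnorm]

theorem trel_deg_le {c : Fin (r + 1) → Fin n → ℝ} (hnorm : ∀ j, c 0 j = 1)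
    {a b : Fin n →₀ ℕ} (h : trel c a b) : deg a ≤ deg b := by
  rw [trel_def] at h
  obtain ⟨i, h1, h2⟩ := h
  have : (deg a : ℝ) ≤ (deg b : ℝ) := by
    rcases eq_or_ne i 0 with rfl | hi
    · rw [← tvec_zero_eq_deg hnorm, ← tvec_zero_eq_deg hnorm]; exact le_of_lt h2
    · rw [← tvec_zero_eq_deg hnorm, ← tvec_zero_eq_deg hnorm, h1 0 (Fin.pos_of_ne_zero hi)]
  exact_mod_cast this

theorem trel_of_le {c : Fin r → Fin n → ℝ} (hnonneg : ∀ i j, 0 ≤ c i j)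
    (htotal : Function.Injective fun a : Fin n →₀ ℕ => tvec c a)
    {a b : Fin n →₀ ℕ} (hle : ∀ t, a t ≤ b t) (hab : a ≠ b) : trel c a b := by
  have hle' : tvec c a ≤ tvec c b := by
    intro i
    exact Finset.sum_le_sum fun j _ =>
      mul_le_mul_of_nonneg_left (Nat.cast_le.2 (hle j)) (hnonneg i j)
  have h1 : toLex (tvec c a) ≤ toLex (tvec c b) :=
    Pi.toLex_monotone hle'
  have h2 : toLex (tvec c a) ≠ toLex (tvec c b) := by
    intro he
    exact hab (htotal (by simpa using he))
  exact h1.lt_of_ne h2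

theorem degset_finite (d : ℕ) : {x : Fin n →₀ ℕ | deg x = d}.Finite := by
  apply Set.Finite.subset (Set.finite_Icc (0 : Fin n →₀ ℕ)
    (Finsupp.equivFunOnFinite.symm fun _ => d))
  intro x hx
  refine ⟨zero_le, Finsupp.le_def.mpr fun t => ?_⟩
  have h1 : x t ≤ deg x := Finset.single_le_sum (f := fun j => x j) (fun j _ => Nat.zero_le _)
    (Finset.mem_univ t)
  have h2 : deg x = d := hx
  show x t ≤ d
  exact h2 ▸ h1

theorem trel_wf (c : Fin (r + 1) → Fin n → ℝ) (hnorm : ∀ j, c 0 j = 1)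
    (htotal : Function.Injective fun a : Fin n →₀ ℕ => tvec c a) :
    WellFounded (trel (n := n) c) := by
  have hwfp : WellFounded (Prod.Lex ((· < ·) : ℕ → ℕ → Prop) ((· < ·) : ℕ → ℕ → Prop)) :=
    WellFounded.prod_lex wellFounded_lt wellFounded_lt
  let ncd : (Fin n →₀ ℕ) → ℕ := fun γ => {x : Fin n →₀ ℕ | deg x = deg γ ∧ trel c x γ}.ncard
  have hsub : ∀ a b : Fin n →₀ ℕ, trel c a b →
      Prod.Lex ((· < ·) : ℕ → ℕ → Prop) ((· < ·) : ℕ → ℕ → Prop)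
        (deg a, ncd a) (deg b, ncd b) := by
    intro a b hab
    have hd := trel_deg_le hnorm hab
    rcases lt_or_eq_of_le hd with hd' | hd'
    · exact Prod.Lex.left _ _ hd'
    · have hfin : {x : Fin n →₀ ℕ | deg x = deg b ∧ trel c x b}.Finite :=
        (degset_finite (deg b)).subset fun x hx => hx.1
      have hss : {x : Fin n →₀ ℕ | deg x = deg a ∧ trel c x a} ⊂
          {x : Fin n →₀ ℕ | deg x = deg b ∧ trel c x b} := by
        constructor
        · rintro x ⟨hx1, hx2⟩
          exact ⟨hx1.trans hd', trel_trans hx2 hab⟩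
        · intro hsub'
          exact trel_irrefl (hsub' ⟨hd', hab⟩).2
      have hcard : ncd a < ncd b := Set.ncard_lt_ncard hss hfin
      rw [show deg a = deg b from hd']
      exact Prod.Lex.right _ hcard
  exact Subrelation.wf (fun {a b} h => hsub a b h)
    (InvImage.wf (fun γ => (deg γ, ncd γ)) hwfp)


/-- membership in the "staircase" region -/
def memD {n k : ℕ} (α : Fin k → (Fin n →₀ ℕ)) (γ : Fin n →₀ ℕ) : Prop :=
  ∃ i, ∀ t, α i t ≤ γ t

open Classical in
/-- one step of the division recursion -/
noncomputable def divBody {K : Type*} [Field K] {n k r : ℕ}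
    (c : Fin r → Fin n → ℝ)
    (g : MvPowerSeries (Fin n) K) (f : Fin k → MvPowerSeries (Fin n) K)
    (α : Fin k → (Fin n →₀ ℕ)) (ι : (Fin n →₀ ℕ) → Fin k)
    (hα : ∀ j b, MvPowerSeries.coeff b (f j) ≠ 0 → b ≠ α j → trel c (α j) b)
    (γ : Fin n →₀ ℕ) (ih : ∀ δ, trel c δ γ → K) : K :=
  if memD α γ then
    (MvPowerSeries.coeff γ g - ∑ j, ∑ p ∈ Finset.HasAntidiagonal.antidiagonal γ,
      if hc : MvPowerSeries.coeff p.2 (f j) ≠ 0 ∧ p.2 ≠ α j ∧ p.1 + p.2 = γ ∧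
          memD α (p.1 + α j) ∧ ι (p.1 + α j) = j
      then ih (p.1 + α j)
        (by
          have h1 : trel c (α j) p.2 := hα j p.2 hc.1 hc.2.1
          have h2 : trel c (p.1 + α j) (p.1 + p.2) := trel_add_left c p.1 h1
          rwa [hc.2.2.1] at h2) * MvPowerSeries.coeff p.2 (f j)
      else 0) / MvPowerSeries.coeff (α (ι γ)) (f (ι γ))
  else 0

/-- existence of the initial exponent -/
theorem exists_exp {K : Type*} [Field K] (c : Fin (r + 1) → Fin n → ℝ)
    (hnorm : ∀ j, c 0 j = 1)
    (htotal : Function.Injective fun a : Fin n →₀ ℕ => tvec c a)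
    {g : MvPowerSeries (Fin n) K} (hg : g ≠ 0) : ∃ a, IsExpOf c g a := by
  have hne : {b : Fin n →₀ ℕ | MvPowerSeries.coeff b g ≠ 0}.Nonempty := by
    by_contra h
    rw [Set.not_nonempty_iff_eq_empty] at h
    apply hg
    ext b
    have : b ∉ {b : Fin n →₀ ℕ | MvPowerSeries.coeff b g ≠ 0} := h ▸ Set.notMem_empty b
    simpa using this
  obtain ⟨a, ha, hmin⟩ := (trel_wf c hnorm htotal).has_min _ hne
  refine ⟨a, ha, fun b hb hba => ?_⟩
  rcases trel_trichotomy htotal (Ne.symm hba) with h | h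
  · exact h
  · exact absurd h (hmin b hb)


/-- Let `I` be an ideal of `K[[x_1,…,x_n]]` and `T̄` a total normalized positive
monomial order.  If `f_1,…,f_k ∈ I` have initial exponents `exp_{T̄}(f_i) = α_i`
which are precisely the vertices of the diagram of initial exponents `Δ(I)`,
then `f_1,…,f_k` generate `I`. -/
theorem span_of_vertices {K : Type*} [Field K] {n k r : ℕ}
    (c : Fin (r + 1) → Fin n → ℝ)
    (hnorm : ∀ j, c 0 j = 1)
    (hnonneg : ∀ i j, 0 ≤ c i j)
    (htotal : Function.Injective fun a : Fin n →₀ ℕ => tvec c a)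
    (I : Ideal (MvPowerSeries (Fin n) K))
    (f : Fin k → MvPowerSeries (Fin n) K)
    (α : Fin k → (Fin n →₀ ℕ))
    (hf : ∀ i, f i ∈ I)
    (hexp : ∀ i, IsExpOf c (f i) (α i))
    (hvert : ∀ v : Fin n →₀ ℕ, IsVertex (diagOfIdeal c I) v ↔ ∃ i, v = α i) :
    I = Ideal.span (Set.range f) := by

  classical
  refine le_antisymm (fun g hg => ?_) ?_
  swap
  · rw [Ideal.span_le]; rintro _ ⟨i, rfl⟩; exact hf i
  by_cases hg0 : g = 0
  · rw [hg0]; exact Ideal.zero_mem _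
  -- every element of the diagram lies above some `α i`
  have hDelta : ∀ a ∈ diagOfIdeal c I, memD α a := by
    intro a ha
    obtain ⟨w, hw, hmin⟩ := (wellFounded_lt (α := Fin n →₀ ℕ)).has_min
      {w | w ∈ diagOfIdeal c I ∧ w ≤ a} ⟨a, ha, le_refl a⟩
    have hv : IsVertex (diagOfIdeal c I) w := by
      refine ⟨hw.1, fun w' hw' hle => ?_⟩
      by_contra hne
      exact hmin w' ⟨hw', le_trans (Finsupp.le_def.mpr hle) hw.2⟩
        (lt_of_le_of_ne (Finsupp.le_def.mpr hle) hne)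
    obtain ⟨i, hi⟩ := (hvert w).1 hv
    refine ⟨i, fun t => ?_⟩
    rw [← hi]
    exact Finsupp.le_def.mp hw.2 t
  obtain ⟨a0, hexpa0⟩ := exists_exp c hnorm htotal hg0
  obtain ⟨i0, -⟩ := hDelta a0 ⟨g, hg, hexpa0⟩
  haveI : Nonempty (Fin k) := ⟨i0⟩
  have hsel : ∀ γ : Fin n →₀ ℕ, ∃ i, memD α γ → ∀ t, α i t ≤ γ t := by
    intro γ
    by_cases h : memD α γ
    · obtain ⟨i, hi⟩ := h; exact ⟨i, fun _ => hi⟩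
    · exact ⟨Classical.arbitrary _, fun hh => absurd hh h⟩
  choose ι hι using hsel
  have hα : ∀ j b, MvPowerSeries.coeff b (f j) ≠ 0 → b ≠ α j → trel c (α j) b :=
    fun j b h1 h2 => (hexp j).2 b h1 h2
  obtain ⟨Q, hQ⟩ : ∃ Q : (Fin n →₀ ℕ) → K,
      ∀ γ, Q γ = divBody c g f α ι hα γ (fun δ _ => Q δ) :=
    ⟨(trel_wf c hnorm htotal).fix (divBody c g f α ι hα),
      fun γ => WellFounded.fix_eq _ _ γ⟩
  set q : Fin k → MvPowerSeries (Fin n) K := fun j =>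
    (fun a => if memD α (a + α j) ∧ ι (a + α j) = j then Q (a + α j) else 0 :
      (Fin n →₀ ℕ) → K) with hqdef
  have hq : ∀ (j : Fin k) (a : Fin n →₀ ℕ), MvPowerSeries.coeff a (q j) =
      if memD α (a + α j) ∧ ι (a + α j) = j then Q (a + α j) else 0 := by
    intro j a; rw [hqdef]; rfl
  have hlc : ∀ j, MvPowerSeries.coeff (α j) (f j) ≠ 0 := fun j => (hexp j).1
  have key : ∀ γ, memD α γ →
      MvPowerSeries.coeff γ (∑ j, q j * f j) = MvPowerSeries.coeff γ g := by
    intro γ hγ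
    have hle : α (ι γ) ≤ γ := Finsupp.le_def.mpr (hι γ hγ)
    have hQγ := hQ γ
    rw [divBody, if_pos hγ] at hQγ
    simp only [dite_eq_ite] at hQγ
    set S : K := ∑ j, ∑ p ∈ Finset.HasAntidiagonal.antidiagonal γ,
      if MvPowerSeries.coeff p.2 (f j) ≠ 0 ∧ p.2 ≠ α j ∧ p.1 + p.2 = γ ∧
          memD α (p.1 + α j) ∧ ι (p.1 + α j) = j
      then Q (p.1 + α j) * MvPowerSeries.coeff p.2 (f j) else 0 with hS
    have hQlc : Q γ * MvPowerSeries.coeff (α (ι γ)) (f (ι γ)) =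
        MvPowerSeries.coeff γ g - S := by
      rw [hQγ, div_mul_cancel₀ _ (hlc (ι γ))]
    have hterm : ∀ j : Fin k, ∀ p ∈ Finset.HasAntidiagonal.antidiagonal γ,
        MvPowerSeries.coeff p.1 (q j) * MvPowerSeries.coeff p.2 (f j) =
        (if MvPowerSeries.coeff p.2 (f j) ≠ 0 ∧ p.2 ≠ α j ∧ p.1 + p.2 = γ ∧
            memD α (p.1 + α j) ∧ ι (p.1 + α j) = j
          then Q (p.1 + α j) * MvPowerSeries.coeff p.2 (f j) else 0) +
        (if p.2 = α j ∧ ι γ = j then Q γ * MvPowerSeries.coeff p.2 (f j) else 0) := by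
      intro j p hp
      have hpsum : p.1 + p.2 = γ := Finset.HasAntidiagonal.mem_antidiagonal.mp hp
      rw [hq]
      by_cases hb : p.2 = α j
      · have hpγ : p.1 + α j = γ := by rw [← hb]; exact hpsum
        by_cases hj : ι γ = j
        · simp [hpγ, hb, hγ, hj]
        · simp [hpγ, hb, hj]
      · by_cases hcf : MvPowerSeries.coeff p.2 (f j) = 0
        · simp [hcf, hb]
        · by_cases hX : memD α (p.1 + α j) ∧ ι (p.1 + α j) = j
          · simp [hb, hcf, hpsum, hX.1, hX.2]
          · rw [if_neg hX, zero_mul,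
              if_neg (show ¬(MvPowerSeries.coeff p.2 (f j) ≠ 0 ∧ p.2 ≠ α j ∧
                  p.1 + p.2 = γ ∧ memD α (p.1 + α j) ∧ ι (p.1 + α j) = j) from
                fun h => hX ⟨h.2.2.2.1, h.2.2.2.2⟩),
              if_neg (show ¬(p.2 = α j ∧ ι γ = j) from fun h => hb h.1), add_zero]
    have hD : ∑ j, ∑ p ∈ Finset.HasAntidiagonal.antidiagonal γ,
        (if p.2 = α j ∧ ι γ = j then Q γ * MvPowerSeries.coeff p.2 (f j) else 0)
        = Q γ * MvPowerSeries.coeff (α (ι γ)) (f (ι γ)) := by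
      rw [Finset.sum_eq_single (ι γ)]
      · rw [Finset.sum_eq_single_of_mem ((γ - α (ι γ), α (ι γ)))]
        · rw [if_pos ⟨rfl, rfl⟩]
        · exact Finset.HasAntidiagonal.mem_antidiagonal.mpr (tsub_add_cancel_of_le hle)
        · rintro p hp hne
          rw [if_neg]
          rintro ⟨h1, -⟩
          apply hne
          have hps : p.1 + p.2 = γ := Finset.HasAntidiagonal.mem_antidiagonal.mp hp
          have hp1 : p.1 + α (ι γ) = γ := by rw [← h1]; exact hps
          have hfst : p.1 = γ - α (ι γ) :=
            add_right_cancel (b := α (ι γ)) (by rw [hp1, tsub_add_cancel_of_le hle])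
          exact Prod.ext hfst h1
      · intro j _ hj
        apply Finset.sum_eq_zero
        intro p _
        rw [if_neg]
        rintro ⟨-, h2⟩
        exact hj h2.symm
      · intro h; exact absurd (Finset.mem_univ _) h
    calc MvPowerSeries.coeff γ (∑ j, q j * f j)
        = ∑ j, ∑ p ∈ Finset.HasAntidiagonal.antidiagonal γ,
            MvPowerSeries.coeff p.1 (q j) * MvPowerSeries.coeff p.2 (f j) := by
          rw [map_sum]
          exact Finset.sum_congr rfl fun j _ => MvPowerSeries.coeff_mul γ (q j) (f j)
      _ = ∑ j, ∑ p ∈ Finset.HasAntidiagonal.antidiagonal γ,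
            ((if MvPowerSeries.coeff p.2 (f j) ≠ 0 ∧ p.2 ≠ α j ∧ p.1 + p.2 = γ ∧
                memD α (p.1 + α j) ∧ ι (p.1 + α j) = j
              then Q (p.1 + α j) * MvPowerSeries.coeff p.2 (f j) else 0) +
            (if p.2 = α j ∧ ι γ = j then Q γ * MvPowerSeries.coeff p.2 (f j) else 0)) :=
          Finset.sum_congr rfl fun j _ => Finset.sum_congr rfl (hterm j)
      _ = S + ∑ j, ∑ p ∈ Finset.HasAntidiagonal.antidiagonal γ,
            (if p.2 = α j ∧ ι γ = j then Q γ * MvPowerSeries.coeff p.2 (f j) else 0) := by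
          rw [hS]
          simp only [Finset.sum_add_distrib]
      _ = MvPowerSeries.coeff γ g := by rw [hD, hQlc]; ring
  set r0 : MvPowerSeries (Fin n) K := g - ∑ j, q j * f j with hr0def
  have hr0I : r0 ∈ I := I.sub_mem hg (Ideal.sum_mem I fun j _ => I.mul_mem_left _ (hf j))
  have hr0z : r0 = 0 := by
    by_contra h0
    obtain ⟨a, ha⟩ := exists_exp c hnorm htotal h0
    have hmem : memD α a := hDelta a ⟨r0, hr0I, ha⟩
    have hc0 : MvPowerSeries.coeff a r0 = 0 := by
      rw [hr0def, map_sub, key a hmem, sub_self]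
    exact ha.1 hc0
  have hgeq : g = ∑ j, q j * f j := by
    have := sub_eq_zero.mp hr0z
    exact this
  rw [hgeq]
  exact Ideal.sum_mem _ fun j _ => Ideal.mul_mem_left _ _ (Ideal.subset_span ⟨j, rfl⟩)
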